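/- For every n ≥ 1 and every field K of characteristic zero, the linear map tr : K[Conj(F(a,b))] → (functions from Hom(F(a,b), GL_n(K)) to K), sending a conjugacy class [γ] to the function ρ ↦ tr(ρ(γ)), is not injective. -/

import Mathlib

set_option linter.unusedSectionVars false

namespace GoldmanAux

abbrev F2 := FreeGroup (Fin 2)

def wrd (k : ℕ) (t : ℕ → ℕ) : F2 :=
  (((List.range k).map (fun j => FreeGroup.of 0 * FreeGroup.of 1 ^ t j)).reverse).prod

def tval (k : ℕ) (S : Finset ℕ) (j : ℕ) : ℕ := if j ∈ S then k + 1 + j else 1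

section perm
variable (k m : ℕ) [NeZero k] [NeZero m]

def pa : Equiv.Perm (ZMod k × ZMod m) := (Equiv.addRight (1 : ZMod k)).prodCongr (Equiv.refl _)

def pb : Equiv.Perm (ZMod k × ZMod m) :=
  Equiv.prodShear (Equiv.refl _) (fun p => Equiv.addRight (if p = 0 then (1 : ZMod m) else 0))

def phi : F2 →* Equiv.Perm (ZMod k × ZMod m) := FreeGroup.lift ![pa k m, pb k m]

lemma pa_apply (p : ZMod k) (x : ZMod m) : pa k m (p, x) = (p + 1, x) := rfl

lemma pb_apply (p : ZMod k) (x : ZMod m) :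
    pb k m (p, x) = (p, x + if p = 0 then 1 else 0) := rfl

lemma pb_pow_apply (t : ℕ) (p : ZMod k) (x : ZMod m) :
    (pb k m ^ t) (p, x) = (p, x + if p = 0 then (t : ZMod m) else 0) := by
  induction t generalizing x with
  | zero => simp
  | succ t ih =>
      rw [pow_succ', Equiv.Perm.mul_apply, pb_apply, ih]
      by_cases hp : p = 0 <;> simp only [hp, if_true, if_false, if_neg] <;>
        push_cast <;> ring_nf

def off : List ℕ → ZMod k → ZMod m
  | [], _ => 0
  | t :: l, p => off l p + if (p + l.length : ZMod k) = 0 then (t : ZMod m) else 0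

lemma phi_list (l : List ℕ) (p : ZMod k) (x : ZMod m) :
    phi k m ((l.map (fun t => FreeGroup.of 0 * FreeGroup.of 1 ^ t)).prod) (p, x)
      = (p + l.length, x + off k m l p) := by
  induction l generalizing p x with
  | nil => simp [off]
  | cons t l ih =>
      rw [List.map_cons, List.prod_cons, map_mul, Equiv.Perm.mul_apply, ih,
        map_mul, map_pow]
      have ha : phi k m (FreeGroup.of 0) = pa k m := by
        simp [phi, FreeGroup.lift_apply_of]
      have hb : phi k m (FreeGroup.of 1) = pb k m := by
        simp [phi, FreeGroup.lift_apply_of]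
      rw [ha, hb, Equiv.Perm.mul_apply, pb_pow_apply, pa_apply]
      simp only [off, List.length_cons]
      push_cast
      rw [add_assoc, add_assoc]

lemma off_rev_range (t : ℕ → ℕ) (r : ℕ) (p : ZMod k) :
    off k m (((List.range r).map t).reverse) p
      = ∑ j ∈ Finset.range r, if (p + j : ZMod k) = 0 then (t j : ZMod m) else 0 := by
  induction r with
  | zero => simp [off]
  | succ r ih =>
      rw [List.range_succ, List.map_append, List.reverse_append]
      simp only [List.map_cons, List.reverse_cons, List.map_nil, List.reverse_nil,
        List.nil_append, List.singleton_append]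
      show off k m (t r :: ((List.range r).map t).reverse) p = _
      rw [Finset.sum_range_succ, ← ih]
      simp only [off, List.length_reverse, List.length_map, List.length_range]

lemma off_eval (t : ℕ → ℕ) (p : ZMod k) :
    off k m (((List.range k).map t).reverse) p = (t (-p).val : ZMod m) := by
  rw [off_rev_range]
  rw [Finset.sum_eq_single_of_mem (-p).val (Finset.mem_range.2 (ZMod.val_lt _))]
  · rw [if_pos]
    rw [ZMod.natCast_val, ZMod.cast_id]
    ring
  · intro j hj hne
    rw [if_neg]
    intro h
    apply hne
    have : (j : ZMod k) = -p := by linear_combination h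
    rw [← this, ZMod.val_cast_of_lt (Finset.mem_range.1 hj)]

lemma phi_wrd (t : ℕ → ℕ) (p : ZMod k) (x : ZMod m) :
    phi k m (wrd k t) (p, x) = (p, x + (t ((-p).val) : ZMod m)) := by
  have : wrd k t
      = (((((List.range k).map t).reverse)).map (fun t => FreeGroup.of 0 * FreeGroup.of 1 ^ t)).prod := by
    rw [wrd, List.map_reverse, List.map_map]
    rfl
  rw [this, phi_list, off_eval]
  simp [ZMod.natCast_self]

end perm

section supp
variable (k : ℕ) [NeZero k]

lemma dvd_tval_iff (S : Finset ℕ) (j j' : ℕ) (hj' : j' < k) :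
    (k + 1 + j) ∣ tval k S j' ↔ (j' = j ∧ j ∈ S) := by
  unfold tval
  by_cases h : j' ∈ S
  · rw [if_pos h]
    constructor
    · rintro ⟨c, hc⟩
      match c with
      | 0 => omega
      | 1 =>
          have hj : j' = j := by omega
          exact ⟨hj, hj ▸ h⟩
      | (c+2) =>
          have h2 : (k+1)*2 ≤ (k+1+j)*(c+2) := Nat.mul_le_mul (by omega) (by omega)
          omega
    · rintro ⟨rfl, -⟩
      exact dvd_refl _
  · rw [if_neg h, Nat.dvd_one]
    constructor
    · omega
    · rintro ⟨rfl, hj⟩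
      exact absurd hj h

lemma card_support_phi_wrd (S : Finset ℕ) (j : ℕ) (hj : j < k) (m : ℕ) [NeZero m]
    (hm : m = k + 1 + j) :
    (phi k m (wrd k (tval k S))).support.card
      = (if j ∈ S then k - 1 else k) * m := by
  have hk : 1 ≤ k := Nat.one_le_iff_ne_zero.2 (NeZero.ne k)
  have hco : ∀ p : ZMod k, ((tval k S ((-p).val) : ZMod m) = 0) ↔ (p = -(j : ZMod k) ∧ j ∈ S) := by
    intro p
    rw [ZMod.natCast_eq_zero_iff, hm, dvd_tval_iff k S j _ (ZMod.val_lt _)]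
    constructor
    · rintro ⟨hv, hS⟩
      refine ⟨?_, hS⟩
      have h2 : ((-p).val : ZMod k) = (j : ZMod k) := by rw [hv]
      rw [ZMod.natCast_val, ZMod.cast_id] at h2
      exact neg_eq_iff_eq_neg.mp h2
    · rintro ⟨rfl, hS⟩
      refine ⟨?_, hS⟩
      rw [neg_neg, ZMod.val_cast_of_lt hj]
  have hsupp : (phi k m (wrd k (tval k S))).support
      = (Finset.univ.filter fun p : ZMod k =>
          ¬ ((tval k S ((-p).val) : ZMod m) = 0)) ×ˢ Finset.univ := by
    ext ⟨p, x⟩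
    simp only [Equiv.Perm.mem_support, Finset.mem_product, Finset.mem_filter,
      Finset.mem_univ, true_and, and_true]
    rw [phi_wrd]
    simp [Prod.ext_iff]
  rw [hsupp, Finset.card_product]
  have hum : (Finset.univ : Finset (ZMod m)).card = m := by
    rw [Finset.card_univ, ZMod.card]
  rw [hum]
  congr 1
  by_cases hjS : j ∈ S
  · rw [if_pos hjS]
    have he : (Finset.univ.filter fun p : ZMod k =>
        ¬ ((tval k S ((-p).val) : ZMod m) = 0)) = Finset.univ.erase (-(j : ZMod k)) := by
      ext p
      simp only [Finset.mem_filter, Finset.mem_univ, true_and, Finset.mem_erase, and_true]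
      rw [hco]
      simp [hjS]
    rw [he, Finset.card_erase_of_mem (Finset.mem_univ _), Finset.card_univ, ZMod.card]
  · rw [if_neg hjS]
    have he : (Finset.univ.filter fun p : ZMod k =>
        ¬ ((tval k S ((-p).val) : ZMod m) = 0)) = Finset.univ := by
      ext p
      simp only [Finset.mem_filter, Finset.mem_univ, true_and, iff_true]
      rw [hco]
      simp [hjS]
    rw [he, Finset.card_univ, ZMod.card]

end supp

lemma not_isConj_wrd (k : ℕ) [NeZero k] (S S' : Finset ℕ)
    (hS : ∀ j ∈ S, j < k) (hS' : ∀ j ∈ S', j < k) (hne : S ≠ S') :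
    ¬ IsConj (wrd k (tval k S)) (wrd k (tval k S')) := by
  have hk : 1 ≤ k := Nat.one_le_iff_ne_zero.2 (NeZero.ne k)
  obtain ⟨j, hj⟩ : ∃ j, ¬ (j ∈ S ↔ j ∈ S') := by
    by_contra h
    push_neg at h
    exact hne (Finset.ext fun j => h j)
  have hjk : j < k := by
    rcases Classical.em (j ∈ S) with h | h
    · exact hS j h
    · exact hS' j (by tauto)
  intro hc
  haveI : NeZero (k + 1 + j) := ⟨by omega⟩
  have hc2 := (phi k (k + 1 + j)).map_isConj hc
  obtain ⟨c, hcc⟩ := isConj_iff.mp hc2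
  have hcard : (phi k (k+1+j) (wrd k (tval k S))).support.card
      = (phi k (k+1+j) (wrd k (tval k S'))).support.card := by
    rw [← hcc, Equiv.Perm.card_support_conj]
  rw [card_support_phi_wrd k S j hjk _ rfl, card_support_phi_wrd k S' j hjk _ rfl] at hcard
  have h2 := Nat.eq_of_mul_eq_mul_right (show 0 < k + 1 + j by omega) hcard
  rcases Classical.em (j ∈ S) with h | h <;> rcases Classical.em (j ∈ S') with h' | h'
  · exact hj ⟨fun _ => h', fun _ => h⟩
  · rw [if_pos h, if_neg h'] at h2; omega
  · rw [if_neg h, if_pos h'] at h2; omega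
  · exact hj ⟨fun hh => absurd hh h, fun hh => absurd hh h'⟩

section poly
variable {K : Type*} [Field K] (n : ℕ)

def env (ρ : F2 →* Matrix.GeneralLinearGroup (Fin n) K) (v : Fin 2 × Fin n × Fin n) : K :=
  ((ρ (FreeGroup.of v.1) : Matrix (Fin n) (Fin n) K)) v.2.1 v.2.2

noncomputable def Xg (g : Fin 2) : Matrix (Fin n) (Fin n) (MvPolynomial (Fin 2 × Fin n × Fin n) K) :=
  Matrix.of fun i j => MvPolynomial.X (g, i, j)

def letters (k : ℕ) (t : ℕ → ℕ) : List (Fin 2) :=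
  (((List.range k).map fun j => (0 : Fin 2) :: List.replicate (t j) 1)).reverse.flatten

lemma wrd_eq_letters (k : ℕ) (t : ℕ → ℕ) :
    wrd k t = ((letters k t).map FreeGroup.of).prod := by
  rw [letters, wrd, List.map_flatten, List.prod_flatten, List.map_reverse,
    List.map_reverse, List.map_map, List.map_map]
  congr 2
  apply List.map_congr_left
  intro j _
  simp [List.map_replicate, List.prod_replicate]

lemma letters_length_le (k : ℕ) (t : ℕ → ℕ) (ht : ∀ j < k, t j ≤ 2 * k) :
    (letters k t).length ≤ 2 * k * k + k := by
  rw [letters, List.length_flatten]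
  have h1 : ∀ x ∈ (((List.range k).map fun j => (0 : Fin 2) :: List.replicate (t j) 1)).reverse.map List.length,
      x ≤ 2 * k + 1 := by
    intro x hx
    rw [List.mem_map] at hx
    obtain ⟨bl, hbl, rfl⟩ := hx
    rw [List.mem_reverse, List.mem_map] at hbl
    obtain ⟨j, hj, rfl⟩ := hbl
    rw [List.mem_range] at hj
    simp only [List.length_cons, List.length_replicate]
    have := ht j hj
    omega
  have h2 := List.sum_le_card_nsmul _ _ h1
  simp only [List.length_map, List.length_reverse, List.length_range, smul_eq_mul] at h2
  calc _ ≤ k * (2 * k + 1) := h2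
    _ = 2 * k * k + k := by ring

lemma entry_deg (ls : List (Fin 2)) (i j : Fin n) :
    (((ls.map (Xg (K := K) n)).prod) i j).totalDegree ≤ ls.length := by
  induction ls generalizing i j with
  | nil =>
      simp only [List.map_nil, List.prod_nil, List.length_nil]
      rw [Matrix.one_apply]
      split
      · exact le_of_eq MvPolynomial.totalDegree_one
      · exact le_of_eq MvPolynomial.totalDegree_zero
  | cons g ls ih =>
      rw [List.map_cons, List.prod_cons, Matrix.mul_apply]
      refine (MvPolynomial.totalDegree_finset_sum _ _).trans ?_
      refine Finset.sup_le fun c _ => ?_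
      refine (MvPolynomial.totalDegree_mul _ _).trans ?_
      rw [List.length_cons]
      have hX : ((Xg (K := K) n g) i c).totalDegree ≤ 1 := by
        rw [Xg, Matrix.of_apply, MvPolynomial.totalDegree_X]
      have := ih c j
      omega

noncomputable def tracePoly (k : ℕ) (t : ℕ → ℕ) : MvPolynomial (Fin 2 × Fin n × Fin n) K :=
  Matrix.trace ((letters k t).map (Xg n)).prod

lemma tracePoly_deg (k : ℕ) (t : ℕ → ℕ) (ht : ∀ j < k, t j ≤ 2 * k) :
    (tracePoly (K := K) n k t).totalDegree ≤ 2 * k * k + k := by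
  rw [tracePoly, Matrix.trace]
  refine (MvPolynomial.totalDegree_finset_sum _ _).trans ?_
  refine Finset.sup_le fun c _ => ?_
  exact (entry_deg n _ c c).trans (letters_length_le k t ht)

lemma eval_tracePoly (k : ℕ) (t : ℕ → ℕ) (ρ : F2 →* Matrix.GeneralLinearGroup (Fin n) K) :
    MvPolynomial.eval (env n ρ) (tracePoly (K := K) n k t)
      = Matrix.trace ((ρ (wrd k t) : Matrix (Fin n) (Fin n) K)) := by
  have h1 : (ρ (wrd k t) : Matrix (Fin n) (Fin n) K)
      = ((letters k t).map fun g => (ρ (FreeGroup.of g) : Matrix (Fin n) (Fin n) K)).prod := by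
    rw [wrd_eq_letters]
    have h2 := map_list_prod ((Units.coeHom (Matrix (Fin n) (Fin n) K)).comp ρ)
      ((letters k t).map FreeGroup.of)
    simpa [List.map_map, Function.comp_def] using h2
  have h3 : ((MvPolynomial.eval (env n ρ)).mapMatrix ((letters k t).map (Xg (K := K) n)).prod)
      = ((letters k t).map fun g => (ρ (FreeGroup.of g) : Matrix (Fin n) (Fin n) K)).prod := by
    rw [map_list_prod, List.map_map]
    congr 1
    apply List.map_congr_left
    intro g _
    ext i j
    simp [Xg, env]
  rw [h1, ← h3, tracePoly, Matrix.trace, Matrix.trace, map_sum]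
  rfl

end poly

section span
variable {K : Type*} [Field K] (n : ℕ)

noncomputable def famF (L : ℕ) (e : Fin 2 × Fin n × Fin n → Fin (L + 1)) :
    (F2 →* Matrix.GeneralLinearGroup (Fin n) K) → K :=
  fun ρ => ∏ w : Fin 2 × Fin n × Fin n, (env n ρ w) ^ (e w : ℕ)

lemma coord_le {σ : Type*} (d : σ →₀ ℕ) (w : σ) : d w ≤ d.sum fun _ e => e := by
  by_cases h : d w = 0
  · simp [h]
  · exact Finset.single_le_sum (fun _ _ => Nat.zero_le _) (Finsupp.mem_support_iff.2 h)

lemma traceFn_mem_span (L k : ℕ) (t : ℕ → ℕ) (ht : ∀ j < k, t j ≤ 2 * k)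
    (hL : 2 * k * k + k ≤ L) :
    (fun ρ : F2 →* Matrix.GeneralLinearGroup (Fin n) K =>
        Matrix.trace ((ρ (wrd k t) : Matrix (Fin n) (Fin n) K)))
      ∈ Submodule.span K (Set.range (famF (K := K) n L)) := by
  have hdeg : (tracePoly (K := K) n k t).totalDegree ≤ L := (tracePoly_deg n k t ht).trans hL
  set p := tracePoly (K := K) n k t with hp
  have hbd : ∀ d ∈ p.support, ∀ w, d w < L + 1 := by
    intro d hd w
    have h1 := (coord_le d w).trans (MvPolynomial.le_totalDegree hd)
    omega
  have key : (fun ρ : F2 →* Matrix.GeneralLinearGroup (Fin n) K =>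
        Matrix.trace ((ρ (wrd k t) : Matrix (Fin n) (Fin n) K)))
      = ∑ d ∈ p.support.attach,
          (MvPolynomial.coeff d.1 p) •
            famF (K := K) n L (fun w => ⟨d.1 w, hbd d.1 d.2 w⟩) := by
    funext ρ
    rw [Finset.sum_apply, ← eval_tracePoly n k t ρ, ← hp]
    conv_lhs => rw [MvPolynomial.as_sum p]
    rw [map_sum,
      ← Finset.sum_attach p.support
        (fun d => MvPolynomial.eval (env n ρ) (MvPolynomial.monomial d (MvPolynomial.coeff d p)))]
    refine Finset.sum_congr rfl fun d _ => ?_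
    rw [MvPolynomial.eval_monomial, Pi.smul_apply, smul_eq_mul, famF]
    congr 1
    rw [Finsupp.prod_pow]
  rw [key]
  exact Submodule.sum_mem _ fun d _ =>
    Submodule.smul_mem _ _ (Submodule.subset_span ⟨_, rfl⟩)

end span

lemma numeric (q : ℕ) (hq : 1 ≤ q) :
    (2 * 2 ^ (2 * q + 8) * 2 ^ (2 * q + 8) + 2 ^ (2 * q + 8) + 1) ^ q < 2 ^ 2 ^ (2 * q + 8) := by
  set jj := 2 * q + 8 with hjj
  set k := 2 ^ jj with hk
  have hk1 : 1 ≤ k := Nat.one_le_two_pow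
  have hkk : 2 ^ (2 * jj + 2) = 4 * (k * k) := by
    rw [hk, ← pow_add, show 2 * jj + 2 = 2 + (jj + jj) by ring, pow_add, pow_add]
    norm_num
  have h1 : 2 * k * k + k + 1 ≤ 2 ^ (2 * jj + 2) := by
    rw [hkk]
    nlinarith
  have h2 : (2 * k * k + k + 1) ^ q ≤ (2 ^ (2 * jj + 2)) ^ q := Nat.pow_le_pow_left h1 q
  rw [← pow_mul] at h2
  have h3 : (2 * jj + 2) * q < 2 ^ jj := by
    have hq2 : q < 2 ^ q := Nat.lt_two_pow_self
    have hqq : q * q < 4 ^ q := by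
      calc q * q < 2 ^ q * 2 ^ q := Nat.mul_lt_mul_of_lt_of_le hq2 (le_of_lt hq2) (by positivity)
        _ = 4 ^ q := by rw [show (4 : ℕ) = 2 * 2 by norm_num, mul_pow]
    have h4 : 2 ^ jj = 256 * 4 ^ q := by
      rw [hjj, pow_add, pow_mul]
      norm_num
      ring
    rw [h4, hjj]
    nlinarith
  exact lt_of_le_of_lt h2 (Nat.pow_lt_pow_right one_lt_two h3)

end GoldmanAux

/-- The trace function on conjugacy classes of `F(a,b)` induced by a
representation `ρ : F(a,b) → GL_n(K)`. It is well defined since the trace is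
conjugation-invariant. -/
def classTrace {K : Type*} [Field K] {n : ℕ}
    (ρ : FreeGroup (Fin 2) →* Matrix.GeneralLinearGroup (Fin n) K) :
    ConjClasses (FreeGroup (Fin 2)) → K :=
  Quotient.lift (fun g => Matrix.trace ((ρ g : Matrix (Fin n) (Fin n) K))) (by
    intro x y hxy
    obtain ⟨z, hz⟩ := isConj_iff.mp hxy
    subst hz
    simp only [map_mul, map_inv, Units.val_mul]
    exact (Matrix.trace_units_conj (ρ z) (ρ x : Matrix (Fin n) (Fin n) K)).symm ▸ rfl)

open GoldmanAux

/-- The Goldman trace map on the free group `F(a,b)` is not injective: the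
linear map from the free `K`-vector space on conjugacy classes of `F(a,b)` to
functions on `Hom(F(a,b), GL_n(K))`, sending `[γ]` to `ρ ↦ tr(ρ(γ))`, has
nontrivial kernel for every `n ≥ 1` and field `K` of characteristic zero. -/
theorem goldman_trace_not_injective {K : Type*} [Field K] [CharZero K]
    (n : ℕ) (hn : 1 ≤ n) :
    ¬ Function.Injective
      (fun (x : ConjClasses (FreeGroup (Fin 2)) →₀ K) =>
        fun (ρ : FreeGroup (Fin 2) →* Matrix.GeneralLinearGroup (Fin n) K) =>
          x.sum fun cl coeff => coeff * classTrace ρ cl) := by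
  classical
  intro hinj
  set q := 2 * (n * n) with hq
  have hq1 : 1 ≤ q := by
    have h0 : 1 * 1 ≤ n * n := Nat.mul_le_mul hn hn
    omega
  set k := 2 ^ (2 * q + 8) with hk
  haveI : NeZero k := ⟨by positivity⟩
  set L := 2 * k * k + k with hLdef
  set W := Submodule.span K (Set.range (famF (K := K) n L)) with hW
  set famS : Finset (Fin k) → Finset ℕ := fun S => S.image Fin.val with hfamS
  have hfam_lt : ∀ S, ∀ j ∈ famS S, j < k := by
    intro S j hj
    rw [hfamS, Finset.mem_image] at hj
    obtain ⟨i, _, rfl⟩ := hj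
    exact i.isLt
  have hfam_inj : Function.Injective famS := Finset.image_injective Fin.val_injective
  set w : Finset (Fin k) → F2 := fun S => wrd k (tval k (famS S)) with hwdef
  set cl : Finset (Fin k) → ConjClasses F2 := fun S => ConjClasses.mk (w S) with hcl
  have hcl_inj : Function.Injective cl := by
    intro S S' h
    by_contra hne
    exact not_isConj_wrd k (famS S) (famS S') (hfam_lt S) (hfam_lt S')
      (fun hh => hne (hfam_inj hh)) (ConjClasses.mk_eq_mk_iff_isConj.mp h)
  set v : Finset (Fin k) → ((F2 →* Matrix.GeneralLinearGroup (Fin n) K) → K) :=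
    fun S ρ => Matrix.trace ((ρ (w S) : Matrix (Fin n) (Fin n) K)) with hv
  have hmem : ∀ S, v S ∈ W := by
    intro S
    refine traceFn_mem_span n L k _ ?_ le_rfl
    intro j hj
    have hk1 : 1 ≤ k := Nat.one_le_two_pow
    by_cases hjS : j ∈ famS S
    · have := hfam_lt S j hjS
      simp only [tval, if_pos hjS]
      omega
    · simp only [tval, if_neg hjS]
      omega
  haveI hWfin : Module.Finite K ↥W :=
    Module.Finite.span_of_finite K (Set.finite_range _)
  have hfr : Module.finrank K ↥W ≤ (L + 1) ^ q := by
    have h1 := finrank_range_le_card (R := K) (famF (K := K) n L)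
    rw [Set.finrank] at h1
    refine h1.trans ?_
    rw [Fintype.card_fun]
    simp only [Fintype.card_prod, Fintype.card_fin, hq]
    ring_nf
    exact le_rfl
  have hnotli : ¬ LinearIndependent K
      (fun S : Finset (Fin k) => (⟨v S, hmem S⟩ : ↥W)) := by
    intro hli
    have h2 := hli.fintype_card_le_finrank
    rw [Fintype.card_finset, Fintype.card_fin] at h2
    have h3 := numeric q hq1
    rw [← hk] at h3
    have h4 : L + 1 = 2 * k * k + k + 1 := by omega
    rw [← h4] at h3
    omega
  obtain ⟨g, hg0, S₀, hgS₀⟩ := Fintype.not_linearIndependent_iff.mp hnotli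
  have hsum : ∑ S : Finset (Fin k), g S • v S = 0 := by
    simpa using congrArg Subtype.val hg0
  set vfun : ConjClasses F2 → ((F2 →* Matrix.GeneralLinearGroup (Fin n) K) → K) :=
    fun c ρ => classTrace ρ c with hvfun
  have hTfun : (fun x : ConjClasses F2 →₀ K =>
        fun ρ : F2 →* Matrix.GeneralLinearGroup (Fin n) K =>
          x.sum fun c coeff => coeff * classTrace ρ c)
      = fun x => Finsupp.linearCombination K vfun x := by
    funext x ρ
    rw [Finsupp.linearCombination_apply, Finsupp.sum, Finsupp.sum, Finset.sum_apply]
    rfl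
  rw [hTfun] at hinj
  set x : ConjClasses F2 →₀ K := ∑ S : Finset (Fin k), Finsupp.single (cl S) (g S) with hx
  have hTLx : Finsupp.linearCombination K vfun x = 0 := by
    rw [hx, map_sum]
    have h5 : ∀ S : Finset (Fin k),
        Finsupp.linearCombination K vfun (Finsupp.single (cl S) (g S)) = g S • v S := by
      intro S
      rw [Finsupp.linearCombination_single]
      rfl
    rw [Finset.sum_congr rfl fun S _ => h5 S, hsum]
  have hx0 : x = 0 := hinj (by
    show Finsupp.linearCombination K vfun x = Finsupp.linearCombination K vfun 0
    rw [hTLx, map_zero])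
  have hcoord : x (cl S₀) = g S₀ := by
    rw [hx, Finsupp.finset_sum_apply]
    rw [Finset.sum_eq_single_of_mem S₀ (Finset.mem_univ _)]
    · exact Finsupp.single_eq_same
    · intro S _ hSne
      exact Finsupp.single_eq_of_ne' fun h => hSne (hcl_inj h)
  rw [hx0] at hcoord
  simp only [Finsupp.coe_zero, Pi.zero_apply] at hcoord
  exact hgS₀ hcoord.symm
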